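/- arXiv:2305.05224 — 4 statements merged into one kernel-verified Lean document; each statement's English description precedes it below -/
import Mathlib

section
/- Let (T_n)_{n≥1} be a sequence of matrices in SL₂(ℝ) such that (1/n)·log‖T_n‖ → 0 as n → ∞, and such that the limit γ = lim_{n→∞} (1/n)·log‖T_n⋯T₁‖ exists and is strictly positive. Then there exists a one-dimensional linear subspace V₋ ⊆ ℝ² such that: (1) for every nonzero v ∈ V₋, lim_{n→∞} (1/n)·log‖T_n⋯T₁ v‖ = −γ; and (2) for every v ∈ ℝ² with v ∉ V₋, lim_{n→∞} (1/n)·log‖T_n⋯T₁ v‖ = γ. -/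
open Filter Topology

/-- The operator norm of a square real matrix, induced by the Euclidean norm. -/
noncomputable def opNorm {n : Type*} [Fintype n] [DecidableEq n] (M : Matrix n n ℝ) : ℝ :=
  ‖Matrix.toEuclideanCLM (𝕜 := ℝ) M‖

/-- `prodRev f n = f (n-1) * ⋯ * f 0`. -/
def prodRev {α : Type*} [Monoid α] (f : ℕ → α) (n : ℕ) : α :=
  ((List.range n).reverse.map f).prod

open RealInnerProductSpace
open scoped Matrix

abbrev E2 : Type := EuclideanSpace ℝ (Fin 2)

lemma prodRev_succ {α : Type*} [Monoid α] (f : ℕ → α) (n : ℕ) :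
    prodRev f (n+1) = f n * prodRev f n := by
  simp [prodRev, List.range_succ]

lemma toCLM_eigen {M : Matrix (Fin 2) (Fin 2) ℝ} (hM : M.IsHermitian) (i : Fin 2) :
    Matrix.toEuclideanCLM (𝕜 := ℝ) M (hM.eigenvectorBasis i) =
      hM.eigenvalues i • hM.eigenvectorBasis i := by
  apply (WithLp.equiv 2 (Fin 2 → ℝ)).injective
  simp only [WithLp.equiv_apply, Matrix.ofLp_toEuclideanCLM, Matrix.toLin'_apply]
  exact hM.mulVec_eigenvectorBasis i

lemma svd_pack (f : E2 →L[ℝ] E2) (v w : E2) (a b : ℝ) (ha : 0 < a) (hab : a ≤ b)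
    (hmul : a * b = 1) (hv : ‖v‖ = 1) (hw : ‖w‖ = 1) (hvw : ⟪v, w⟫ = 0)
    (hexp : ∀ x : E2, x = ⟪v, x⟫ • v + ⟪w, x⟫ • w)
    (hkey : ∀ x, ‖f x‖ ^ 2 = a * ⟪v, x⟫ ^ 2 + b * ⟪w, x⟫ ^ 2) :
    ∃ (v' w' : E2) (σ : ℝ), 1 ≤ σ ∧ ‖f‖ = σ ∧ ‖v'‖ = 1 ∧ ‖w'‖ = 1 ∧ ⟪v', w'⟫ = 0 ∧
      (∀ x : E2, ⟪v', x⟫^2 + ⟪w', x⟫^2 = ‖x‖^2) ∧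
      (∀ x, ‖f x‖ ^ 2 = σ⁻¹ ^ 2 * ⟪v', x⟫ ^ 2 + σ ^ 2 * ⟪w', x⟫ ^ 2) := by
  have hb : 0 < b := lt_of_lt_of_le ha hab
  set σ := Real.sqrt b with hσdef
  have hσpos : 0 < σ := Real.sqrt_pos.2 hb
  have hσsq : σ ^ 2 = b := Real.sq_sqrt hb.le
  have hb1 : 1 ≤ b := by nlinarith
  have hσ1 : 1 ≤ σ := Real.one_le_sqrt.2 hb1
  have hainv : a = σ⁻¹ ^ 2 := by
    field_simp [hσsq]
    nlinarith
  have hpar : ∀ x : E2, ⟪v, x⟫ ^ 2 + ⟪w, x⟫ ^ 2 = ‖x‖ ^ 2 := by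
    intro x
    rw [← real_inner_self_eq_norm_sq]
    nth_rw 3 [hexp x]
    rw [inner_add_left, real_inner_smul_left, real_inner_smul_left]
    ring
  refine ⟨v, w, σ, hσ1, ?_, hv, hw, hvw, hpar, fun x => by rw [hkey x, hainv, hσsq]⟩
  apply le_antisymm
  · apply ContinuousLinearMap.opNorm_le_bound _ hσpos.le
    intro x
    have h1 : ‖f x‖ ^ 2 ≤ σ ^ 2 * ‖x‖ ^ 2 := by
      rw [hkey x, ← hpar x, hσsq]
      nlinarith [sq_nonneg (⟪v, x⟫), sq_nonneg (⟪w, x⟫)]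
    nlinarith [norm_nonneg (f x), norm_nonneg x, mul_nonneg hσpos.le (norm_nonneg x)]
  · have h2 : ‖f w‖ = σ := by
      have : ‖f w‖ ^ 2 = σ ^ 2 := by
        rw [hkey w, hvw, real_inner_self_eq_norm_sq, hw, hσsq]
        ring
      nlinarith [norm_nonneg (f w)]
    calc σ = ‖f w‖ := h2.symm
    _ ≤ ‖f‖ * ‖w‖ := f.le_opNorm w
    _ = ‖f‖ := by rw [hw, mul_one]

lemma sl2_svd (M : Matrix (Fin 2) (Fin 2) ℝ) (hdet : M.det = 1) :
    ∃ (v w : E2) (σ : ℝ), 1 ≤ σ ∧ ‖Matrix.toEuclideanCLM (𝕜 := ℝ) M‖ = σ ∧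
      ‖v‖ = 1 ∧ ‖w‖ = 1 ∧ ⟪v, w⟫ = 0 ∧
      (∀ x : E2, ⟪v, x⟫^2 + ⟪w, x⟫^2 = ‖x‖^2) ∧
      (∀ x, ‖Matrix.toEuclideanCLM (𝕜 := ℝ) M x‖ ^ 2
          = σ⁻¹ ^ 2 * ⟪v, x⟫ ^ 2 + σ ^ 2 * ⟪w, x⟫ ^ 2) := by
  set f := Matrix.toEuclideanCLM (𝕜 := ℝ) M with hf
  set S := Mᴴ * M with hSdef
  have hS : S.IsHermitian := Matrix.isHermitian_conjTranspose_mul_self M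
  set μ := hS.eigenvalues with hμdef
  set e := hS.eigenvectorBasis with hedef
  have hpos : ∀ i, 0 ≤ μ i := (Matrix.posSemidef_conjTranspose_mul_self M).eigenvalues_nonneg
  have hprodμ : μ 0 * μ 1 = 1 := by
    have h1 : S.det = ∏ i, (μ i : ℝ) := hS.det_eq_prod_eigenvalues
    have h2 : S.det = 1 := by
      rw [hSdef, Matrix.det_mul, Matrix.det_conjTranspose, hdet]
      simp
    rw [h2] at h1
    simpa [Fin.prod_univ_two] using h1.symm
  have hpos0 : 0 < μ 0 := by
    rcases (hpos 0).lt_or_eq with h | h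
    · exact h
    · exfalso; rw [← h] at hprodμ; simp at hprodμ
  have hpos1 : 0 < μ 1 := by nlinarith
  -- expansion
  have hexp : ∀ x : E2, x = ⟪e 0, x⟫ • e 0 + ⟪e 1, x⟫ • e 1 := by
    intro x
    have := e.sum_repr' x
    rw [Fin.sum_univ_two] at this
    exact this.symm
  have he0 : ‖e 0‖ = 1 := e.orthonormal.1 0
  have he1 : ‖e 1‖ = 1 := e.orthonormal.1 1
  have he01 : ⟪e 0, e 1⟫ = 0 := e.orthonormal.2 (by decide)
  -- key formula
  have hSx : ∀ x : E2, Matrix.toEuclideanCLM (𝕜 := ℝ) S x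
      = (μ 0 * ⟪e 0, x⟫) • e 0 + (μ 1 * ⟪e 1, x⟫) • e 1 := by
    intro x
    conv_lhs => rw [hexp x]
    rw [map_add, map_smul, map_smul, toCLM_eigen hS 0, toCLM_eigen hS 1,
      smul_smul, smul_smul, mul_comm]
    ring_nf
    rw [← hμdef, ← hedef, mul_comm (μ 0)]
  have hkey : ∀ x : E2, ‖f x‖ ^ 2 = μ 0 * ⟪e 0, x⟫ ^ 2 + μ 1 * ⟪e 1, x⟫ ^ 2 := by
    intro x
    have hadj : ⟪Matrix.toEuclideanCLM (𝕜 := ℝ) S x, x⟫ = ‖f x‖ ^ 2 := by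
      rw [hSdef, map_mul]
      have hstar : Matrix.toEuclideanCLM (𝕜 := ℝ) Mᴴ = star f := by
        rw [hf, ← map_star]
        rfl
      show ⟪(Matrix.toEuclideanCLM (𝕜 := ℝ) Mᴴ) (f x), x⟫ = _
      rw [hstar, ContinuousLinearMap.star_eq_adjoint, ContinuousLinearMap.adjoint_inner_left,
        real_inner_self_eq_norm_sq]
    rw [← hadj, hSx x, inner_add_left, real_inner_smul_left, real_inner_smul_left]
    ring
  rcases le_total (μ 0) (μ 1) with h | h
  · exact svd_pack f (e 0) (e 1) (μ 0) (μ 1) hpos0 h hprodμ he0 he1 he01 hexp hkey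
  · refine svd_pack f (e 1) (e 0) (μ 1) (μ 0) hpos1 h (by nlinarith) he1 he0
      (by rw [real_inner_comm]; exact he01) (fun x => by rw [add_comm]; exact hexp x)
      (fun x => by rw [hkey x]; ring)

lemma tendsto_of_abs_sub_le {x : ℕ → ℝ} {L : ℝ}
    (h : ∀ ε > 0, ∀ᶠ n in atTop, |x n - L| ≤ ε) : Tendsto x atTop (𝓝 L) := by
  rw [Metric.tendsto_atTop]
  intro ε hε
  obtain ⟨N, hN⟩ := (h (ε/2) (by linarith)).exists_forall_of_atTop
  refine ⟨N, fun n hn => ?_⟩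
  rw [Real.dist_eq]
  linarith [hN n hn]

/-- From two-sided exponential bounds (for every small `ε`) deduce the exponential
growth rate of `y`. -/
lemma log_tendsto_of_bounds {y : ℕ → ℝ} {L : ℝ}
    (h : ∀ ε > 0, ∃ cl cu : ℝ, 0 < cl ∧ 0 < cu ∧ ∀ᶠ n : ℕ in atTop,
      cl * Real.exp ((L - ε) * n) ≤ y n ∧ y n ≤ cu * Real.exp ((L + ε) * n)) :
    Tendsto (fun n : ℕ => (1 / (n : ℝ)) * Real.log (y n)) atTop (𝓝 L) := by
  apply tendsto_of_abs_sub_le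
  intro ε hε
  obtain ⟨cl, cu, hcl, hcu, hev⟩ := h (ε/2) (by linarith)
  have h1 : Tendsto (fun n : ℕ => |Real.log cl| / n) atTop (𝓝 0) :=
    tendsto_const_div_atTop_nhds_zero_nat _
  have h2 : Tendsto (fun n : ℕ => |Real.log cu| / n) atTop (𝓝 0) :=
    tendsto_const_div_atTop_nhds_zero_nat _
  have h1' := h1.eventually_le_const (show (0:ℝ) < ε/2 by linarith)
  have h2' := h2.eventually_le_const (show (0:ℝ) < ε/2 by linarith)
  filter_upwards [hev, h1', h2', eventually_ge_atTop 1] with n hb hc1 hc2 hn1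
  have hn : (0:ℝ) < n := by exact_mod_cast hn1
  have hy : 0 < y n := lt_of_lt_of_le (by positivity) hb.1
  have hlow : Real.log cl + (L - ε/2) * n ≤ Real.log (y n) := by
    rw [← Real.log_exp ((L - ε/2) * n), ← Real.log_mul hcl.ne' (Real.exp_pos _).ne']
    exact Real.log_le_log (by positivity) hb.1
  have hup : Real.log (y n) ≤ Real.log cu + (L + ε/2) * n := by
    rw [← Real.log_exp ((L + ε/2) * n), ← Real.log_mul hcu.ne' (Real.exp_pos _).ne']
    exact Real.log_le_log hy hb.2
  have hc1' : |Real.log cl| ≤ ε/2 * n := by rw [div_le_iff₀ hn] at hc1; linarith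
  have hc2' : |Real.log cu| ≤ ε/2 * n := by rw [div_le_iff₀ hn] at hc2; linarith
  have hA : (L - ε) * n ≤ Real.log (y n) := by
    have := neg_abs_le (Real.log cl); nlinarith
  have hB : Real.log (y n) ≤ (L + ε) * n := by
    have := le_abs_self (Real.log cu); nlinarith
  have hA' : L - ε ≤ Real.log (y n) / n := (le_div_iff₀ hn).2 hA
  have hB' : Real.log (y n) / n ≤ L + ε := (div_le_iff₀ hn).2 hB
  rw [one_div_mul_eq_div, abs_le]
  constructor <;> linarith

lemma le_of_sq_le' {a b : ℝ} (ha : 0 ≤ a) (hb : 0 ≤ b) (h : a^2 ≤ b^2) : a ≤ b := by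
  nlinarith

lemma eq_of_sq_eq {a b : ℝ} (ha : 0 ≤ a) (hb : 0 ≤ b) (h : a^2 = b^2) : a = b := by
  rw [← Real.sqrt_sq ha, ← Real.sqrt_sq hb, h]

lemma tendsto_exp_neg_nat {c : ℝ} (hc : 0 < c) :
    Tendsto (fun n : ℕ => Real.exp (-c * n)) atTop (𝓝 0) := by
  have h := tendsto_pow_atTop_nhds_zero_of_lt_one (Real.exp_pos (-c)).le
    (Real.exp_lt_one_iff.2 (by linarith))
  convert h using 2 with n
  rw [← Real.exp_nat_mul]
  ring_nf

set_option maxHeartbeats 1600000 in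
theorem oseledets_aux (g : ℕ → (E2 →L[ℝ] E2)) (σ τ : ℕ → ℝ) (v w : ℕ → E2)
    (γ : ℝ) (hγpos : 0 < γ)
    (hσ1 : ∀ n, 1 ≤ σ n) (hτ1 : ∀ n, 1 ≤ τ n)
    (hnorm : ∀ n, ‖g n‖ = σ n)
    (hv : ∀ n, ‖v n‖ = 1)
    (hpar : ∀ n x, ⟪v n, x⟫^2 + ⟪w n, x⟫^2 = ‖x‖^2)
    (hkey : ∀ n x, ‖g n x‖^2 = (σ n)⁻¹^2 * ⟪v n, x⟫^2 + (σ n)^2 * ⟪w n, x⟫^2)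
    (hgrow : ∀ n x, ‖g (n+1) x‖ ≤ τ n * ‖g n x‖)
    (hσten : Tendsto (fun n : ℕ => (1/(n:ℝ)) * Real.log (σ n)) atTop (𝓝 γ))
    (hτten : Tendsto (fun n : ℕ => (1/(n:ℝ)) * Real.log (τ n)) atTop (𝓝 0)) :
    ∃ V : Submodule ℝ (EuclideanSpace ℝ (Fin 2)), Module.finrank ℝ V = 1 ∧
      (∀ x ∈ V, x ≠ 0 →
        Tendsto (fun n : ℕ => (1/(n:ℝ)) * Real.log ‖g n x‖) atTop (𝓝 (-γ))) ∧
      (∀ x : EuclideanSpace ℝ (Fin 2), x ∉ V →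
        Tendsto (fun n : ℕ => (1/(n:ℝ)) * Real.log ‖g n x‖) atTop (𝓝 γ)) := by
  have hσpos : ∀ n, 0 < σ n := fun n => lt_of_lt_of_le one_pos (hσ1 n)
  have hτpos : ∀ n, 0 < τ n := fun n => lt_of_lt_of_le one_pos (hτ1 n)
  -- eventual exponential bounds on σ and τ
  have hbound : ∀ ε : ℝ, 0 < ε → ∀ᶠ n : ℕ in atTop,
      Real.exp ((γ-ε)*n) ≤ σ n ∧ σ n ≤ Real.exp ((γ+ε)*n) ∧ τ n ≤ Real.exp (ε*n) := by
    intro ε hε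
    obtain ⟨N1, h1⟩ := Metric.tendsto_atTop.1 hσten ε hε
    obtain ⟨N2, h2⟩ := Metric.tendsto_atTop.1 hτten ε hε
    filter_upwards [eventually_ge_atTop N1, eventually_ge_atTop N2, eventually_ge_atTop 1]
      with n hn1 hn2 hn3
    have hnR : (0:ℝ) < n := by exact_mod_cast hn3
    have e1 := h1 n hn1
    have e2 := h2 n hn2
    rw [Real.dist_eq, abs_lt, one_div_mul_eq_div] at e1 e2
    have hσl : (γ-ε)*n ≤ Real.log (σ n) := (le_div_iff₀ hnR).1 (by linarith [e1.1])
    have hσu : Real.log (σ n) ≤ (γ+ε)*n := (div_le_iff₀ hnR).1 (by linarith [e1.2])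
    have hτu : Real.log (τ n) ≤ ε*n := (div_le_iff₀ hnR).1 (by linarith [e2.2])
    refine ⟨?_, ?_, ?_⟩
    · rw [← Real.exp_log (hσpos n)]; exact Real.exp_le_exp.2 hσl
    · rw [← Real.exp_log (hσpos n)]; exact Real.exp_le_exp.2 hσu
    · rw [← Real.exp_log (hτpos n)]; exact Real.exp_le_exp.2 hτu
  -- basic pointwise facts
  have hgv : ∀ n, ‖g n (v n)‖ = (σ n)⁻¹ := by
    intro n
    refine eq_of_sq_eq (norm_nonneg _) (inv_nonneg.2 (hσpos n).le) ?_
    have h1 : ⟪v n, v n⟫ = 1 := by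
      rw [real_inner_self_eq_norm_sq, hv n]; norm_num
    have h2 : ⟪w n, v n⟫^2 = 0 := by
      have h3 := hpar n (v n)
      rw [hv n, h1] at h3
      nlinarith
    rw [hkey n (v n), h1, h2]
    ring
  have hgup : ∀ n (x : E2), ‖g n x‖ ≤ σ n * ‖x‖ := by
    intro n x
    rw [← hnorm n]
    exact (g n).le_opNorm x
  -- the contracted direction decay
  have hs : ∀ n, |⟪w (n+1), v n⟫| ≤ τ n / (σ n * σ (n+1)) := by
    intro n
    have h1 : (σ (n+1) * |⟪w (n+1), v n⟫|)^2 ≤ ‖g (n+1) (v n)‖^2 := by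
      rw [hkey (n+1) (v n), mul_pow, sq_abs]
      have : (0:ℝ) ≤ (σ (n+1))⁻¹^2 * ⟪v (n+1), v n⟫^2 := by positivity
      linarith
    have h2 : ‖g (n+1) (v n)‖ ≤ τ n * (σ n)⁻¹ := by
      rw [← hgv n]; exact hgrow n (v n)
    have h3 : σ (n+1) * |⟪w (n+1), v n⟫| ≤ τ n * (σ n)⁻¹ := by
      refine le_of_sq_le' (mul_nonneg (hσpos _).le (abs_nonneg _))
        (mul_nonneg (hτpos n).le (inv_nonneg.2 (hσpos n).le)) ?_
      refine le_trans h1 ?_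
      have := norm_nonneg (g (n+1) (v n))
      nlinarith [h2, mul_nonneg (hτpos n).le (inv_nonneg.2 (hσpos n).le)]
    refine (le_div_iff₀ (mul_pos (hσpos n) (hσpos (n+1)))).2 ?_
    have h4 : |⟪w (n+1), v n⟫| * (σ n * σ (n+1)) = (σ (n+1) * |⟪w (n+1), v n⟫|) * σ n := by
      ring
    rw [h4]
    calc (σ (n+1) * |⟪w (n+1), v n⟫|) * σ n ≤ (τ n * (σ n)⁻¹) * σ n :=
        mul_le_mul_of_nonneg_right h3 (hσpos n).le
    _ = τ n := by rw [mul_assoc, inv_mul_cancel₀ (hσpos n).ne', mul_one]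
  -- the sign-corrected sequence of contracted directions
  set ζ : ℕ → E2 := fun n => Nat.rec (motive := fun _ => E2) (v 0)
    (fun m z => if ⟪z, v (m+1)⟫ < 0 then -(v (m+1)) else v (m+1)) n with hζdef
  have hζsucc : ∀ n, ζ (n+1) = if ⟪ζ n, v (n+1)⟫ < 0 then -(v (n+1)) else v (n+1) :=
    fun n => rfl
  have hζpm : ∀ n, ζ n = v n ∨ ζ n = -(v n) := by
    intro n
    cases n with
    | zero => left; rfl
    | succ m =>
      rw [hζsucc m]
      by_cases h : ⟪ζ m, v (m+1)⟫ < 0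
      · right; rw [if_pos h]
      · left; rw [if_neg h]
  have hζnorm : ∀ n, ‖ζ n‖ = 1 := by
    intro n
    rcases hζpm n with h | h <;> rw [h] <;> simp [hv n]
  have hζinner : ∀ n, ⟪ζ n, ζ (n+1)⟫ = |⟪ζ n, v (n+1)⟫| := by
    intro n
    rw [hζsucc n]
    by_cases h : ⟪ζ n, v (n+1)⟫ < 0
    · rw [if_pos h, inner_neg_right, abs_of_neg h]
    · rw [if_neg h, abs_of_nonneg (not_lt.1 h)]
  have habs : ∀ n, |⟪ζ n, v (n+1)⟫| = |⟪v (n+1), v n⟫| := by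
    intro n
    rcases hζpm n with h | h <;> rw [h]
    · rw [real_inner_comm]
    · rw [inner_neg_left, abs_neg, real_inner_comm]
  -- distance between consecutive directions
  have hdistv : ∀ n, dist (ζ n) (ζ (n+1)) ≤ 2 * |⟪w (n+1), v n⟫| := by
    intro n
    have hc2 : ⟪v (n+1), v n⟫^2 + ⟪w (n+1), v n⟫^2 = 1 := by
      rw [hpar (n+1) (v n), hv n]; norm_num
    have habs1 : |⟪v (n+1), v n⟫| ≤ 1 := by
      refine le_of_sq_le' (abs_nonneg _) zero_le_one ?_
      rw [sq_abs, one_pow]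
      nlinarith [sq_nonneg (⟪w (n+1), v n⟫)]
    have hd2 : dist (ζ n) (ζ (n+1))^2 = 2 - 2*|⟪v (n+1), v n⟫| := by
      rw [dist_eq_norm, norm_sub_sq_real, hζnorm n, hζnorm (n+1), hζinner n, habs n]
      ring
    refine le_of_sq_le' dist_nonneg (by positivity) ?_
    rw [hd2, mul_pow, sq_abs]
    nlinarith [abs_nonneg (⟪v (n+1), v n⟫), sq_abs (⟪v (n+1), v n⟫),
      mul_nonneg (sub_nonneg.2 habs1)
      (by positivity : (0:ℝ) ≤ 4*|⟪v (n+1), v n⟫| + 2)]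
  set d : ℕ → ℝ := fun n => dist (ζ n) (ζ (n+1)) with hddef
  have hd0 : ∀ n, 0 ≤ d n := fun n => dist_nonneg
  -- eventual geometric decay of d
  have hdev : ∀ ε : ℝ, 0 < ε → ε ≤ γ/8 → ∀ᶠ n : ℕ in atTop,
      d n ≤ 2 * Real.exp (-(2*γ-3*ε)*n) := by
    intro ε hε hε8
    have hbev := hbound ε hε
    obtain ⟨N, hN⟩ := eventually_atTop.1 hbev
    rw [eventually_atTop]
    refine ⟨N, fun n hn => ?_⟩
    obtain ⟨hσl, hσu, hτu⟩ := hN n hn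
    obtain ⟨hσl', _, _⟩ := hN (n+1) (by omega)
    have hσl'' : Real.exp ((γ-ε)*n) ≤ σ (n+1) := by
      refine le_trans (Real.exp_le_exp.2 ?_) hσl'
      have : (0:ℝ) ≤ γ - ε := by linarith
      have hcast : (n:ℝ) ≤ (n+1:ℕ) := by push_cast; linarith
      nlinarith
    have h1 : d n ≤ 2 * (τ n / (σ n * σ (n+1))) :=
      le_trans (hdistv n) (by linarith [hs n])
    have h2 : τ n / (σ n * σ (n+1)) ≤
        Real.exp (ε*n) / (Real.exp ((γ-ε)*n) * Real.exp ((γ-ε)*n)) := by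
      apply div_le_div₀ (Real.exp_pos _).le hτu (by positivity)
      exact mul_le_mul hσl hσl'' (Real.exp_pos _).le (hσpos n).le
    have h3 : Real.exp (ε*n) / (Real.exp ((γ-ε)*n) * Real.exp ((γ-ε)*n))
        = Real.exp (-(2*γ-3*ε)*n) := by
      rw [← Real.exp_add, ← Real.exp_sub]
      congr 1
      ring
    rw [h3] at h2
    linarith
  -- convergence of ζ
  have hsummable : Summable d := by
    obtain ⟨N, hN⟩ := eventually_atTop.1 (hdev (γ/8) (by linarith) le_rfl)
    set r : ℝ := Real.exp (-(2*γ-3*(γ/8))) with hrdef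
    have hr0 : 0 < r := Real.exp_pos _
    have hr1 : r < 1 := Real.exp_lt_one_iff.2 (by linarith)
    have hpow : ∀ k : ℕ, Real.exp (-(2*γ-3*(γ/8)) * k) = r^k := fun k => by
      rw [show -(2*γ-3*(γ/8)) * (k:ℝ) = (k:ℝ) * -(2*γ-3*(γ/8)) from mul_comm _ _,
        Real.exp_nat_mul]
    rw [← summable_nat_add_iff N]
    refine Summable.of_nonneg_of_le (fun n => hd0 _) (fun n => ?_)
      ((summable_geometric_of_lt_one hr0.le hr1).mul_left 2)
    have h1 := hN (n+N) (by omega)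
    rw [hpow (n+N)] at h1
    calc d (n+N) ≤ 2 * r^(n+N) := h1
    _ ≤ 2 * r^n := by
        have := pow_le_pow_of_le_one hr0.le hr1.le (Nat.le_add_right n N)
        linarith
  -- the limit direction
  have hcauchy : CauchySeq ζ := cauchySeq_of_summable_dist hsummable
  obtain ⟨u, hu⟩ := cauchySeq_tendsto_of_complete hcauchy
  have hunorm : ‖u‖ = 1 := by
    have h1 : Tendsto (fun n => ‖ζ n‖) atTop (𝓝 ‖u‖) := hu.norm
    have h2 : Tendsto (fun n : ℕ => ‖ζ n‖) atTop (𝓝 1) := by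
      simp only [hζnorm]
      exact tendsto_const_nhds
    exact tendsto_nhds_unique h1 h2
  have hune : u ≠ 0 := by
    intro h
    rw [h, norm_zero] at hunorm
    norm_num at hunorm
  have htail : ∀ n, dist (ζ n) u ≤ ∑' m, d (n + m) :=
    dist_le_tsum_of_dist_le_of_tendsto d (fun k => le_rfl) hsummable hu
  -- the quantitative estimate, for every small ε
  have hδ : ∀ ε : ℝ, 0 < ε → ε ≤ γ/8 → ∃ (N : ℕ) (K : ℝ), 0 < K ∧ ∀ n ≥ N,
      (Real.exp ((γ-ε)*n) ≤ σ n ∧ σ n ≤ Real.exp ((γ+ε)*n)) ∧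
      ‖u - ζ n‖ ≤ K * Real.exp (-(2*γ-3*ε)*n) := by
    intro ε hε hε8
    set r : ℝ := Real.exp (-(2*γ-3*ε)) with hrdef
    have hr0 : 0 < r := Real.exp_pos _
    have hr1 : r < 1 := Real.exp_lt_one_iff.2 (by linarith)
    have hpow : ∀ k : ℕ, Real.exp (-(2*γ-3*ε) * k) = r^k := fun k => by
      rw [show -(2*γ-3*ε) * (k:ℝ) = (k:ℝ) * -(2*γ-3*ε) from mul_comm _ _,
        Real.exp_nat_mul]
    obtain ⟨N, hN⟩ := eventually_atTop.1 ((hbound ε hε).and (hdev ε hε hε8))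
    have h1r : (0:ℝ) < 1 - r := by linarith
    refine ⟨N, 2*(1-r)⁻¹, by positivity, fun n hn => ?_⟩
    refine ⟨⟨(hN n hn).1.1, (hN n hn).1.2.1⟩, ?_⟩
    have hsum2 : Summable (fun m => 2 * r^n * r^m) :=
      (summable_geometric_of_lt_one hr0.le hr1).mul_left _
    have hsum1 : Summable (fun m => d (n + m)) := by
      have h := (summable_nat_add_iff n).2 hsummable
      refine h.congr fun m => ?_
      rw [add_comm]
    have h1 : ‖u - ζ n‖ = dist (ζ n) u := by rw [dist_comm, dist_eq_norm]
    rw [h1]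
    calc dist (ζ n) u ≤ ∑' m, d (n + m) := htail n
    _ ≤ ∑' m, 2 * r^n * r^m := by
        refine Summable.tsum_le_tsum (fun m => ?_) hsum1 hsum2
        have h2 := (hN (n+m) (by omega)).2
        rw [hpow (n+m)] at h2
        calc d (n+m) ≤ 2 * r^(n+m) := h2
        _ = 2 * r^n * r^m := by rw [pow_add]; ring
    _ = 2 * r^n * (1-r)⁻¹ := by
        rw [tsum_mul_left, tsum_geometric_of_lt_one hr0.le hr1]
    _ = 2*(1-r)⁻¹ * Real.exp (-(2*γ-3*ε)*n) := by rw [hpow n]; ring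
  -- conclusion
  refine ⟨Submodule.span ℝ {u}, finrank_span_singleton hune, ?_, ?_⟩
  · -- vectors in the contracted line
    intro x hx hx0
    obtain ⟨t, ht⟩ := Submodule.mem_span_singleton.1 hx
    have ht0 : t ≠ 0 := by
      rintro rfl
      rw [zero_smul] at ht
      exact hx0 ht.symm
    have hfun : (fun n : ℕ => (1/(n:ℝ)) * Real.log ‖g n x‖)
        = fun n : ℕ => (1/(n:ℝ)) * Real.log (|t| * ‖g n u‖) := by
      funext n
      rw [← ht, map_smul, norm_smul, Real.norm_eq_abs]
    rw [hfun]
    apply log_tendsto_of_bounds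
    intro ε' hε'
    have hεpos : 0 < min (ε'/5) (γ/8) := lt_min (by linarith) (by linarith)
    set ε := min (ε'/5) (γ/8) with hεdef
    have hε8 : ε ≤ γ/8 := min_le_right _ _
    have hε5 : 5*ε ≤ ε' := by
      have := min_le_left (ε'/5) (γ/8)
      rw [← hεdef] at this
      linarith
    obtain ⟨N, K, hK, hNK⟩ := hδ ε hεpos hε8
    refine ⟨|t|/2, |t| * (1+K), by positivity, by positivity, ?_⟩
    have hev1 : ∀ᶠ n : ℕ in atTop, K * Real.exp (-(2*γ-3*ε)*n) ≤ 1/2 := by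
      have h := (tendsto_exp_neg_nat (show (0:ℝ) < 2*γ-3*ε by linarith)).const_mul K
      rw [mul_zero] at h
      exact h.eventually_le_const (by norm_num)
    filter_upwards [eventually_ge_atTop N, hev1] with n hnN hhalf
    obtain ⟨⟨hσl, hσu⟩, hδn⟩ := hNK n hnN
    have hδ12 : ‖u - ζ n‖ ≤ 1/2 := le_trans hδn hhalf
    have hinner : 1/2 ≤ |⟪v n, u⟫| := by
      have hzz : ⟪ζ n, ζ n⟫ = 1 := by
        rw [real_inner_self_eq_norm_sq, hζnorm n]; norm_num
      have h1 : ⟪ζ n, u⟫ = 1 + ⟪ζ n, u - ζ n⟫ := by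
        rw [inner_sub_right, hzz]; ring
      have h2 : |⟪ζ n, u - ζ n⟫| ≤ 1/2 := by
        refine le_trans (le_trans (abs_real_inner_le_norm _ _) ?_) hδ12
        rw [hζnorm n, one_mul]
      have h3 : 1/2 ≤ |⟪ζ n, u⟫| := by
        rw [h1]
        have h4 : (1:ℝ)/2 ≤ 1 + ⟪ζ n, u - ζ n⟫ := by
          have := (abs_le.1 h2).1
          linarith
        exact le_trans h4 (le_abs_self _)
      rcases hζpm n with h | h
      · rwa [h] at h3
      · rw [h, inner_neg_left, abs_neg] at h3; exact h3
    have hlow : (1/2) * (σ n)⁻¹ ≤ ‖g n u‖ := by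
      refine le_of_sq_le' (mul_nonneg (by norm_num) (inv_nonneg.2 (hσpos n).le))
        (norm_nonneg _) ?_
      rw [hkey n u]
      have h5 : (1/2:ℝ)^2 ≤ ⟪v n, u⟫^2 := by
        rw [← sq_abs (⟪v n, u⟫)]
        exact pow_le_pow_left₀ (by norm_num) hinner 2
      have h6 : (σ n)⁻¹^2 * (1/2:ℝ)^2 ≤ (σ n)⁻¹^2 * ⟪v n, u⟫^2 :=
        mul_le_mul_of_nonneg_left h5 (by positivity)
      have h7 : (0:ℝ) ≤ (σ n)^2 * ⟪w n, u⟫^2 := by positivity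
      nlinarith [h6, h7]
    have hup2 : ‖g n u‖ ≤ (σ n)⁻¹ + σ n * ‖u - ζ n‖ := by
      have hdecomp : ζ n + (u - ζ n) = u := by abel
      have h6 : ‖g n (ζ n)‖ = (σ n)⁻¹ := by
        rcases hζpm n with h | h
        · rw [h, hgv n]
        · rw [h, map_neg, norm_neg, hgv n]
      calc ‖g n u‖ = ‖g n (ζ n) + g n (u - ζ n)‖ := by rw [← map_add, hdecomp]
      _ ≤ ‖g n (ζ n)‖ + ‖g n (u - ζ n)‖ := norm_add_le _ _
      _ ≤ (σ n)⁻¹ + σ n * ‖u - ζ n‖ := by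
          rw [h6]
          exact add_le_add_right (hgup n _) _
    constructor
    · have e1 : Real.exp (-(γ+ε)*n) ≤ (σ n)⁻¹ := by
        rw [show -(γ+ε)*(n:ℝ) = -((γ+ε)*n) by ring, Real.exp_neg]
        exact inv_anti₀ (hσpos n) hσu
      have e2 : Real.exp ((-γ-ε')*n) ≤ Real.exp (-(γ+ε)*n) :=
        Real.exp_le_exp.2 (mul_le_mul_of_nonneg_right (by linarith) (Nat.cast_nonneg n))
      calc |t|/2 * Real.exp ((-γ-ε')*n) ≤ |t|/2 * (σ n)⁻¹ := by
            have := abs_nonneg t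
            nlinarith [le_trans e2 e1]
      _ = |t| * ((1/2)*(σ n)⁻¹) := by ring
      _ ≤ |t| * ‖g n u‖ := mul_le_mul_of_nonneg_left hlow (abs_nonneg t)
    · have e3 : (σ n)⁻¹ ≤ Real.exp (-(γ-ε)*n) := by
        rw [show -(γ-ε)*(n:ℝ) = -((γ-ε)*n) by ring, Real.exp_neg]
        exact inv_anti₀ (Real.exp_pos _) hσl
      have e4 : σ n * ‖u - ζ n‖ ≤ K * Real.exp (-(γ-4*ε)*n) := by
        calc σ n * ‖u - ζ n‖
            ≤ Real.exp ((γ+ε)*n) * (K * Real.exp (-(2*γ-3*ε)*n)) :=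
              mul_le_mul hσu hδn (norm_nonneg _) (Real.exp_pos _).le
        _ = K * (Real.exp ((γ+ε)*n) * Real.exp (-(2*γ-3*ε)*n)) := by ring
        _ = K * Real.exp (-(γ-4*ε)*n) := by
            rw [← Real.exp_add, show (γ+ε)*(n:ℝ) + -(2*γ-3*ε)*n = -(γ-4*ε)*n from by ring]
      have e5 : Real.exp (-(γ-ε)*n) ≤ Real.exp (-(γ-4*ε)*n) :=
        Real.exp_le_exp.2 (mul_le_mul_of_nonneg_right (by linarith) (Nat.cast_nonneg n))
      have e6 : Real.exp (-(γ-4*ε)*n) ≤ Real.exp ((-γ+ε')*n) :=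
        Real.exp_le_exp.2 (mul_le_mul_of_nonneg_right (by linarith) (Nat.cast_nonneg n))
      calc |t| * ‖g n u‖ ≤ |t| * ((σ n)⁻¹ + σ n * ‖u - ζ n‖) :=
            mul_le_mul_of_nonneg_left hup2 (abs_nonneg t)
      _ ≤ |t| * ((1+K) * Real.exp ((-γ+ε')*n)) := by
          have c1 : (σ n)⁻¹ ≤ Real.exp ((-γ+ε')*n) := le_trans e3 (le_trans e5 e6)
          have c2 : K * Real.exp (-(γ-4*ε)*n) ≤ K * Real.exp ((-γ+ε')*n) :=
            mul_le_mul_of_nonneg_left e6 hK.le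
          have c3 : σ n * ‖u - ζ n‖ ≤ K * Real.exp ((-γ+ε')*n) := le_trans e4 c2
          have := abs_nonneg t
          nlinarith [c1, c3]
      _ = |t| * (1+K) * Real.exp ((-γ+ε')*n) := by ring
  · -- vectors outside the contracted line
    intro x hx
    have hx0 : x ≠ 0 := by
      rintro rfl
      exact hx (Submodule.zero_mem _)
    have hxn : 0 < ‖x‖ := norm_pos_iff.2 hx0
    set c : ℝ := ⟪u, x⟫ with hcdef
    have hbpos : 0 < ‖x - c • u‖ := by
      rw [norm_pos_iff]
      intro h
      apply hx
      rw [sub_eq_zero] at h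
      exact Submodule.mem_span_singleton.2 ⟨c, h.symm⟩
    set b : ℝ := ‖x - c • u‖^2 with hbdef
    have hb0 : 0 < b := by positivity
    have hbeq : b = ‖x‖^2 - c^2 := by
      rw [hbdef, norm_sub_sq_real, real_inner_smul_right, ← real_inner_comm x u, ← hcdef,
        norm_smul, Real.norm_eq_abs, hunorm, mul_one, sq_abs]
      ring
    have hcs : |c| ≤ ‖x‖ := by
      have := abs_real_inner_le_norm u x
      rwa [hunorm, one_mul] at this
    apply log_tendsto_of_bounds
    intro ε' hε'
    have hεpos : 0 < min (ε'/2) (γ/8) := lt_min (by linarith) (by linarith)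
    set ε := min (ε'/2) (γ/8) with hεdef
    have hε8 : ε ≤ γ/8 := min_le_right _ _
    have hε2 : 2*ε ≤ ε' := by
      have := min_le_left (ε'/2) (γ/8)
      rw [← hεdef] at this
      linarith
    obtain ⟨N, K, hK, hNK⟩ := hδ ε hεpos hε8
    refine ⟨Real.sqrt (b/2), ‖x‖, Real.sqrt_pos.2 (by linarith), hxn, ?_⟩
    have hev1 : ∀ᶠ n : ℕ in atTop,
        K * Real.exp (-(2*γ-3*ε)*n) ≤ min 1 (b/(6*‖x‖^2)) := by
      have h := (tendsto_exp_neg_nat (show (0:ℝ) < 2*γ-3*ε by linarith)).const_mul K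
      rw [mul_zero] at h
      exact h.eventually_le_const (lt_min one_pos (by positivity))
    filter_upwards [eventually_ge_atTop N, hev1] with n hnN hsm
    obtain ⟨⟨hσl, hσu⟩, hδn⟩ := hNK n hnN
    have hδ1 : ‖u - ζ n‖ ≤ 1 := le_trans hδn (le_trans hsm (min_le_left _ _))
    have hδ2 : ‖u - ζ n‖ ≤ b/(6*‖x‖^2) := le_trans hδn (le_trans hsm (min_le_right _ _))
    have hδ0 : 0 ≤ ‖u - ζ n‖ := norm_nonneg _
    -- the expanding component of x is bounded below
    have hwn : b/2 ≤ ⟪w n, x⟫^2 := by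
      have hp := hpar n x
      have h1 : ⟪v n, x⟫^2 = ⟪ζ n, x⟫^2 := by
        rcases hζpm n with h | h
        · rw [h]
        · rw [h, inner_neg_left]; ring
      have h2 : |⟪ζ n, x⟫| ≤ |c| + ‖u - ζ n‖ * ‖x‖ := by
        have h3 : ⟪ζ n, x⟫ = c - ⟪u - ζ n, x⟫ := by
          rw [inner_sub_left, ← hcdef]; ring
        rw [h3]
        refine le_trans (abs_sub _ _) ?_
        exact add_le_add_right (le_trans (abs_real_inner_le_norm _ _) le_rfl) _
      have h4 : ⟪ζ n, x⟫^2 ≤ (|c| + ‖u - ζ n‖ * ‖x‖)^2 := by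
        rw [← sq_abs (⟪ζ n, x⟫)]
        exact pow_le_pow_left₀ (abs_nonneg _) h2 2
      have h5 : ‖u - ζ n‖ * (6*‖x‖^2) ≤ b := by
        rw [le_div_iff₀ (by positivity : (0:ℝ) < 6*‖x‖^2)] at hδ2
        exact hδ2
      nlinarith [h4, h1, hp, hbeq, hcs, hδ1, hδ0, hxn, sq_abs c,
        mul_nonneg hδ0 hxn.le, sq_nonneg (‖u - ζ n‖*‖x‖)]
    have hlow : Real.sqrt (b/2) * σ n ≤ ‖g n x‖ := by
      refine le_of_sq_le' (mul_nonneg (Real.sqrt_nonneg _) (hσpos n).le)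
        (norm_nonneg _) ?_
      rw [hkey n x, mul_pow, Real.sq_sqrt (by linarith : (0:ℝ) ≤ b/2)]
      have h6 : (σ n)^2 * (b/2) ≤ (σ n)^2 * ⟪w n, x⟫^2 :=
        mul_le_mul_of_nonneg_left hwn (by positivity)
      have h7 : (0:ℝ) ≤ (σ n)⁻¹^2 * ⟪v n, x⟫^2 := by positivity
      nlinarith [h6, h7]
    constructor
    · have e1 : Real.exp ((γ-ε')*n) ≤ Real.exp ((γ-ε)*n) :=
        Real.exp_le_exp.2 (mul_le_mul_of_nonneg_right (by linarith) (Nat.cast_nonneg n))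
      calc Real.sqrt (b/2) * Real.exp ((γ-ε')*n)
          ≤ Real.sqrt (b/2) * σ n := by
            have h8 := Real.sqrt_nonneg (b/2)
            nlinarith [le_trans e1 hσl]
      _ ≤ ‖g n x‖ := hlow
    · have e2 : Real.exp ((γ+ε)*n) ≤ Real.exp ((γ+ε')*n) :=
        Real.exp_le_exp.2 (mul_le_mul_of_nonneg_right (by linarith) (Nat.cast_nonneg n))
      calc ‖g n x‖ ≤ σ n * ‖x‖ := hgup n x
      _ ≤ Real.exp ((γ+ε')*n) * ‖x‖ := by
          nlinarith [hxn, le_trans hσu e2]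
      _ = ‖x‖ * Real.exp ((γ+ε')*n) := by ring

/-- **Oseledets' theorem in SL₂(ℝ), deterministic form (Ruelle).**
If `(T n)` is a sequence of matrices of determinant 1 such that `(1/n) log ‖T n‖ → 0` and
`(1/n) log ‖T (n-1) ⋯ T 0‖ → γ > 0`, then there is a one-dimensional subspace `V₋` of ℝ²
such that `(1/n) log ‖T (n-1) ⋯ T 0 · v‖ → -γ` for every nonzero `v ∈ V₋`, and
`(1/n) log ‖T (n-1) ⋯ T 0 · v‖ → γ` for every `v ∉ V₋`. -/
theorem oseledets_SL2 (T : ℕ → Matrix (Fin 2) (Fin 2) ℝ)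
    (hdet : ∀ n, (T n).det = 1) (γ : ℝ) (hγpos : 0 < γ)
    (hT : Tendsto (fun n : ℕ => (1 / (n : ℝ)) * Real.log (opNorm (T n))) atTop (𝓝 0))
    (hprod : Tendsto (fun n : ℕ => (1 / (n : ℝ)) * Real.log (opNorm (prodRev T n)))
      atTop (𝓝 γ)) :
    ∃ V : Submodule ℝ (EuclideanSpace ℝ (Fin 2)), Module.finrank ℝ V = 1 ∧
      (∀ v ∈ V, v ≠ 0 →
        Tendsto (fun n : ℕ =>
            (1 / (n : ℝ)) * Real.log ‖Matrix.toEuclideanCLM (𝕜 := ℝ) (prodRev T n) v‖)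
          atTop (𝓝 (-γ))) ∧
      (∀ v : EuclideanSpace ℝ (Fin 2), v ∉ V →
        Tendsto (fun n : ℕ =>
            (1 / (n : ℝ)) * Real.log ‖Matrix.toEuclideanCLM (𝕜 := ℝ) (prodRev T n) v‖)
          atTop (𝓝 γ)) := by
  have hdetp : ∀ n, (prodRev T n).det = 1 := by
    intro n
    induction n with
    | zero => simp [prodRev]
    | succ n ih => rw [prodRev_succ, Matrix.det_mul, hdet, ih, one_mul]
  choose v w σ hσ1 hnorm hv hw hvw hpar hkey using fun n => sl2_svd (prodRev T n) (hdetp n)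
  have hτ1 : ∀ n, 1 ≤ ‖Matrix.toEuclideanCLM (𝕜 := ℝ) (T n)‖ := by
    intro n
    obtain ⟨v', w', σ', h1, h2, _⟩ := sl2_svd (T n) (hdet n)
    rw [h2]; exact h1
  have hσten : Tendsto (fun n : ℕ => (1/(n:ℝ)) * Real.log (σ n)) atTop (𝓝 γ) := by
    have heq : (fun n : ℕ => (1 / (n : ℝ)) * Real.log (opNorm (prodRev T n)))
        = fun n : ℕ => (1/(n:ℝ)) * Real.log (σ n) := by
      funext n
      rw [opNorm, hnorm n]
    rwa [heq] at hprod
  have hτten : Tendsto (fun n : ℕ =>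
      (1/(n:ℝ)) * Real.log ‖Matrix.toEuclideanCLM (𝕜 := ℝ) (T n)‖) atTop (𝓝 0) := hT
  have hgrow : ∀ (n : ℕ) (x : E2),
      ‖Matrix.toEuclideanCLM (𝕜 := ℝ) (prodRev T (n+1)) x‖
        ≤ ‖Matrix.toEuclideanCLM (𝕜 := ℝ) (T n)‖
          * ‖Matrix.toEuclideanCLM (𝕜 := ℝ) (prodRev T n) x‖ := by
    intro n x
    rw [prodRev_succ, map_mul, ContinuousLinearMap.mul_apply]
    exact (Matrix.toEuclideanCLM (𝕜 := ℝ) (T n)).le_opNorm _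
  obtain ⟨V, h1, h2, h3⟩ := oseledets_aux
    (fun n => Matrix.toEuclideanCLM (𝕜 := ℝ) (prodRev T n)) σ
    (fun n => ‖Matrix.toEuclideanCLM (𝕜 := ℝ) (T n)‖) v w γ hγpos hσ1 hτ1 hnorm hv hpar
    hkey hgrow hσten hτten
  exact ⟨V, h1, h2, h3⟩
end

section
/- Fix E ∈ ℝ and two distinct real numbers a ≠ b. Let A_a = [[a−E, −1],[1, 0]] and A_b = [[b−E, −1],[1, 0]], both elements of SL₂(ℝ), and let G be the closure, in the space of 2×2 real matrices, of the subgroup generated by A_a and A_b. Then G is not a compact subset of the 2×2 real matrices, and G is strongly irreducible. -/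
open Filter Topology

/-- The subgroup (as a set of matrices) generated by a set `S` of invertible matrices:
the multiplicative closure of `S` together with its inverses. -/
def matGenGroup {n R : Type*} [Fintype n] [DecidableEq n] [CommRing R]
    (S : Set (Matrix n n R)) : Set (Matrix n n R) :=
  {A | A ∈ Submonoid.closure (S ∪ (Inv.inv '' S))}

/-- A set of 2×2 real matrices is strongly irreducible if there is no nonempty finite union of
one-dimensional subspaces of ℝ² that is invariant under every element of the set. -/
def StronglyIrreducible (T : Set (Matrix (Fin 2) (Fin 2) ℝ)) : Prop :=
  ¬ ∃ (k : ℕ) (V : Fin (k + 1) → Submodule ℝ (EuclideanSpace ℝ (Fin 2))),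
      (∀ i, Module.finrank ℝ (V i) = 1) ∧
      ∀ M ∈ T, (fun v => Matrix.toEuclideanCLM (𝕜 := ℝ) M v) ''
          (⋃ i, (V i : Set (EuclideanSpace ℝ (Fin 2)))) =
        ⋃ i, (V i : Set (EuclideanSpace ℝ (Fin 2)))

/-- Transfer matrix of the 1-dimensional discrete Anderson model at energy `E` with
potential value `a`. -/
def transferMat (a E : ℝ) : Matrix (Fin 2) (Fin 2) ℝ := !![a - E, -1; 1, 0]

lemma transferMat_inv (b E : ℝ) : (transferMat b E)⁻¹ = !![0, 1; -1, b - E] := by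
  apply Matrix.inv_eq_right_inv
  simp [transferMat, Matrix.mul_fin_two, Matrix.one_fin_two]

lemma transferMat_mul_inv (a b E : ℝ) :
    transferMat a E * (transferMat b E)⁻¹ = !![1, a - b; 0, 1] := by
  rw [transferMat_inv]
  simp [transferMat, Matrix.mul_fin_two]

lemma unipotent_pow (c : ℝ) (n : ℕ) :
    (!![1, c; 0, 1] : Matrix (Fin 2) (Fin 2) ℝ) ^ n = !![1, n * c; 0, 1] := by
  induction n with
  | zero => simp [Matrix.one_fin_two]
  | succ n ih => rw [pow_succ, ih]; simp [Matrix.mul_fin_two]; ring_nf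

lemma euclCLM_apply (N : Matrix (Fin 2) (Fin 2) ℝ) (x : EuclideanSpace ℝ (Fin 2)) (i : Fin 2) :
    (Matrix.toEuclideanCLM (𝕜 := ℝ) N x) i = (N.mulVec (fun j => x j)) i := rfl

lemma mem_gen_left (a b E : ℝ) :
    transferMat a E ∈ matGenGroup {transferMat a E, transferMat b E} :=
  Submonoid.subset_closure (Set.mem_union_left _ (Set.mem_insert _ _))

lemma mem_gen_N (a b E : ℝ) :
    (!![1, a - b; 0, 1] : Matrix (Fin 2) (Fin 2) ℝ)
      ∈ matGenGroup {transferMat a E, transferMat b E} := by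
  rw [← transferMat_mul_inv a b E]
  exact mul_mem
    (Submonoid.subset_closure (Set.mem_union_left _ (Set.mem_insert _ _)))
    (Submonoid.subset_closure (Set.mem_union_right _
      ⟨transferMat b E, Set.mem_insert_of_mem _ rfl, rfl⟩))

/-- For any energy `E` and two distinct potential values `a ≠ b`, the closure (in the space of
2×2 real matrices) of the group generated by the two transfer matrices `A_a`, `A_b` is
non-compact and strongly irreducible. -/
theorem transfer_group_noncompact_stronglyIrreducible (E a b : ℝ) (hab : a ≠ b) :
    ¬ IsCompact (closure (matGenGroup {transferMat a E, transferMat b E})) ∧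
      StronglyIrreducible (closure (matGenGroup {transferMat a E, transferMat b E})) := by
  set c : ℝ := a - b with hc_def
  have hc : c ≠ 0 := sub_ne_zero.mpr hab
  set S : Set (Matrix (Fin 2) (Fin 2) ℝ) := {transferMat a E, transferMat b E} with hS
  set K := closure (matGenGroup S) with hK
  set N : Matrix (Fin 2) (Fin 2) ℝ := !![1, c; 0, 1] with hN
  have hNmem : N ∈ matGenGroup S := mem_gen_N a b E
  have hNK : N ∈ K := subset_closure hNmem
  have hNmem' : N ∈ Submonoid.closure (S ∪ (Inv.inv '' S)) := hNmem
  have hNpow : ∀ n : ℕ, N ^ n ∈ K := fun n =>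
    subset_closure (show N ^ n ∈ matGenGroup S from pow_mem hNmem' n)
  constructor
  · -- non-compactness
    intro hcomp
    have hf : Continuous fun M : Matrix (Fin 2) (Fin 2) ℝ => |M 0 1| :=
      (continuous_id.matrix_elem 0 1).abs
    have himg : IsCompact ((fun M : Matrix (Fin 2) (Fin 2) ℝ => |M 0 1|) '' K) :=
      hcomp.image hf
    obtain ⟨C, hC⟩ := himg.bddAbove
    obtain ⟨n, hn⟩ := exists_nat_gt (C / |c|)
    have hmem : |(N ^ n) 0 1| ≤ C := hC ⟨N ^ n, hNpow n, rfl⟩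
    have : (N ^ n) 0 1 = n * c := by rw [hN, unipotent_pow]; simp
    rw [this, abs_mul, Nat.abs_cast] at hmem
    have hcpos : (0:ℝ) < |c| := abs_pos.mpr hc
    have : C / |c| < n := hn
    nlinarith [hmem, (div_lt_iff₀ hcpos).mp hn]
  · -- strong irreducibility
    rintro ⟨k, V, hrank, hinv⟩
    set W : Set (EuclideanSpace ℝ (Fin 2)) := ⋃ i, (V i : Set (EuclideanSpace ℝ (Fin 2)))
      with hW
    have hmapN : ∀ v ∈ W, Matrix.toEuclideanCLM (𝕜 := ℝ) N v ∈ W := by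
      intro v hv
      have := hinv N hNK
      rw [← this]
      exact ⟨v, hv, rfl⟩
    -- coordinates of the action of N
    have hNc0 : ∀ x : EuclideanSpace ℝ (Fin 2),
        (Matrix.toEuclideanCLM (𝕜 := ℝ) N x) 0 = x 0 + c * x 1 := by
      intro x
      rw [euclCLM_apply]
      simp [hN, Matrix.mulVec, dotProduct, Fin.sum_univ_two]
    have hNc1 : ∀ x : EuclideanSpace ℝ (Fin 2),
        (Matrix.toEuclideanCLM (𝕜 := ℝ) N x) 1 = x 1 := by
      intro x
      rw [euclCLM_apply]
      simp [hN, Matrix.mulVec, dotProduct, Fin.sum_univ_two]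
    -- every vector of W has second coordinate 0
    have hsecond : ∀ v ∈ W, v 1 = 0 := by
      intro v hvW
      by_contra hv1
      set T := fun x : EuclideanSpace ℝ (Fin 2) => Matrix.toEuclideanCLM (𝕜 := ℝ) N x with hT
      set w : ℕ → EuclideanSpace ℝ (Fin 2) := fun n => T^[n] v with hwdef
      have hwW : ∀ n, w n ∈ W := by
        intro n
        induction n with
        | zero => simpa [hwdef] using hvW
        | succ n ih =>
          have : w (n+1) = T (w n) := by
            simp [hwdef, Function.iterate_succ_apply']
          rw [this]
          exact hmapN _ ih
      have hw1 : ∀ n, w n 1 = v 1 := by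
        intro n
        induction n with
        | zero => simp [hwdef]
        | succ n ih =>
          have : w (n+1) = T (w n) := by
            simp [hwdef, Function.iterate_succ_apply']
          rw [this]
          exact (hNc1 (w n)).trans ih
      have hw0 : ∀ n : ℕ, w n 0 = v 0 + n * (c * v 1) := by
        intro n
        induction n with
        | zero => simp [hwdef]
        | succ n ih =>
          have : w (n+1) = T (w n) := by
            simp [hwdef, Function.iterate_succ_apply']
          rw [this]
          refine (hNc0 (w n)).trans ?_
          rw [ih, hw1 n]
          push_cast
          ring
      -- pigeonhole: k+2 iterates, k+1 lines
      have hchoose : ∀ n : Fin (k + 2), ∃ i : Fin (k + 1), w n ∈ V i := by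
        intro n
        have := hwW n
        simpa [hW, Set.mem_iUnion] using this
      choose g hg using hchoose
      have hcard : Fintype.card (Fin (k + 1)) < Fintype.card (Fin (k + 2)) := by simp
      obtain ⟨n, m, hnm, hgnm⟩ := Fintype.exists_ne_map_eq_of_card_lt g hcard
      set i := g n with hi
      have hwn : w n ∈ V i := hg n
      have hwm : w m ∈ V i := hgnm ▸ hg m
      obtain ⟨u, hu0, hu⟩ := finrank_eq_one_iff'.mp (hrank i)
      obtain ⟨s, hs⟩ := hu (⟨w n, hwn⟩ : V i)
      obtain ⟨t, ht⟩ := hu (⟨w m, hwm⟩ : V i)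
      have hsv : w n = s • (u : EuclideanSpace ℝ (Fin 2)) := by
        have := congrArg (Subtype.val) hs
        simpa using this.symm
      have htv : w m = t • (u : EuclideanSpace ℝ (Fin 2)) := by
        have := congrArg (Subtype.val) ht
        simpa using this.symm
      have hu1 : (u : EuclideanSpace ℝ (Fin 2)) 1 ≠ 0 := by
        intro h
        have := hw1 n
        rw [hsv] at this
        simp [PiLp.smul_apply, h] at this
        exact hv1 this.symm
      have hst : s = t := by
        have h1 : s * (u : EuclideanSpace ℝ (Fin 2)) 1 = v 1 := by
          have := hw1 n; rwa [hsv, PiLp.smul_apply, smul_eq_mul] at this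
        have h2 : t * (u : EuclideanSpace ℝ (Fin 2)) 1 = v 1 := by
          have := hw1 m; rwa [htv, PiLp.smul_apply, smul_eq_mul] at this
        have := h1.trans h2.symm
        exact mul_right_cancel₀ hu1 this
      have hweq : w n = w m := by rw [hsv, htv, hst]
      have h0 : ((n : ℕ) : ℝ) * (c * v 1) = ((m : ℕ) : ℝ) * (c * v 1) := by
        have h1 := hw0 n
        have h2 := hw0 m
        rw [hweq] at h1
        rw [h1] at h2
        linarith
      have hcv : c * v 1 ≠ 0 := mul_ne_zero hc hv1
      have : ((n : ℕ) : ℝ) = ((m : ℕ) : ℝ) := mul_right_cancel₀ hcv h0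
      have : (n : ℕ) = (m : ℕ) := Nat.cast_injective this
      exact hnm (Fin.ext this)
    -- now derive a contradiction using A_a
    obtain ⟨u, hu0, _⟩ := finrank_eq_one_iff'.mp (hrank 0)
    have huW : (u : EuclideanSpace ℝ (Fin 2)) ∈ W := Set.mem_iUnion.mpr ⟨0, u.2⟩
    have hu1 : (u : EuclideanSpace ℝ (Fin 2)) 1 = 0 := hsecond _ huW
    have hu0' : (u : EuclideanSpace ℝ (Fin 2)) 0 ≠ 0 := by
      intro h
      apply hu0
      apply Subtype.ext
      ext j
      fin_cases j
      · exact h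
      · exact hu1
    have hAK : transferMat a E ∈ K := subset_closure (mem_gen_left a b E)
    have hAu : Matrix.toEuclideanCLM (𝕜 := ℝ) (transferMat a E) u ∈ W := by
      rw [← hinv (transferMat a E) hAK]
      exact ⟨u, huW, rfl⟩
    have := hsecond _ hAu
    rw [euclCLM_apply] at this
    simp [transferMat, Matrix.mulVec, dotProduct, Fin.sum_univ_two, hu1] at this
    exact hu0' this
end

section
/- Let D ≥ 1, let V₀ be the D×D real matrix with all diagonal entries 0, with entries 1 on the sub-diagonal and super-diagonal, and 0 elsewhere, and for E ∈ ℝ and v ∈ {0,1}^D let T_v(E) = [[V₀ + diag(v₁,…,v_D) − E·I_D, −I_D],[I_D, 0]] ∈ Sp_D(ℝ). Let G_E be the subgroup of Sp_D(ℝ) generated by {T_v(E) : v ∈ {0,1}^D}. Then for every E ∈ ℝ, every real polynomial in the 2D×2D matrix entries that vanishes at every element of G_E also vanishes at every block matrix [[I_D, Δ],[0, I_D]] where Δ is an arbitrary D×D real diagonal matrix. -/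
open scoped Matrix

/-- The standard symplectic form matrix `J = [[0, -I],[I, 0]]`. -/
def Jmat (D : ℕ) : Matrix (Fin D ⊕ Fin D) (Fin D ⊕ Fin D) ℝ :=
  Matrix.fromBlocks 0 (-1) 1 0

/-- The symplectic group `Sp_D(ℝ)`, as a set of `2D × 2D` real matrices `M` with
`Mᵀ J M = J`. -/
def SpSet (D : ℕ) : Set (Matrix (Fin D ⊕ Fin D) (Fin D ⊕ Fin D) ℝ) :=
  {M | Mᵀ * Jmat D * M = Jmat D}

/-- The free interaction matrix `V₀`: zero diagonal, `1` on the sub- and super-diagonal. -/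
def V0 (D : ℕ) : Matrix (Fin D) (Fin D) ℝ :=
  Matrix.of fun i j => if (i : ℕ) + 1 = (j : ℕ) ∨ (j : ℕ) + 1 = (i : ℕ) then 1 else 0

/-- Transfer matrix of the discrete quasi-one-dimensional Anderson–Bernoulli model:
`T_v(E) = [[V₀ + diag v − E·I, −I],[I, 0]]`. -/
def transferQ1D (D : ℕ) (E : ℝ) (v : Fin D → ℝ) :
    Matrix (Fin D ⊕ Fin D) (Fin D ⊕ Fin D) ℝ :=
  Matrix.fromBlocks (V0 D + Matrix.diagonal v - E • 1) (-1) 1 0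

open MvPolynomial

/-- A multivariate real polynomial vanishing at all integer points is zero. -/
lemma mv_zero_of_int_vanish : ∀ (n : ℕ) (p : MvPolynomial (Fin n) ℝ),
    (∀ z : Fin n → ℤ, MvPolynomial.eval (fun i => (z i : ℝ)) p = 0) → p = 0 := by
  intro n
  induction n with
  | zero =>
    intro p h
    apply MvPolynomial.funext
    intro x
    have := h (fun i => 0)
    rw [map_zero, show x = (fun i => ((0:ℤ) : ℝ)) from funext fun i => i.elim0]
    exact this
  | succ n ih =>
    intro p h
    have key : ∀ z : Fin n → ℤ,
        Polynomial.map (MvPolynomial.eval fun i => (z i : ℝ))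
          (MvPolynomial.finSuccEquiv ℝ n p) = 0 := by
      intro z
      apply Polynomial.eq_zero_of_infinite_isRoot
      apply Set.Infinite.mono (s := Set.range (Int.cast : ℤ → ℝ))
      · rintro x ⟨t, rfl⟩
        show Polynomial.IsRoot _ _
        unfold Polynomial.IsRoot
        rw [← MvPolynomial.eval_eq_eval_mv_eval']
        have := h (Fin.cons t z)
        rw [show ((fun i => ((Fin.cons t z : Fin (n+1) → ℤ) i : ℝ)) : Fin (n+1) → ℝ)
            = Fin.cons (t : ℝ) (fun i => (z i : ℝ)) from
          funext fun i => Fin.cases (by simp) (by simp) i] at this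
        exact this
      · exact Set.infinite_range_of_injective Int.cast_injective
    have hq : MvPolynomial.finSuccEquiv ℝ n p = 0 := by
      rw [Polynomial.ext_iff]
      intro k
      rw [Polynomial.coeff_zero]
      apply ih
      intro z
      have := key z
      have := congrArg (fun q => Polynomial.coeff q k) this
      simpa using this
    have := congrArg (MvPolynomial.finSuccEquiv ℝ n).symm hq
    simpa using this

/-- Every real polynomial in the matrix entries vanishing on the group generated by the
transfer matrices `T_v(E)`, `v ∈ {0,1}^D`, also vanishes at every block matrix
`[[I, Δ],[0, I]]` with `Δ` an arbitrary real diagonal matrix. -/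
theorem polynomial_vanishes_on_unipotent_diagonal (D : ℕ) (hD : 1 ≤ D) (E : ℝ)
    (P : MvPolynomial ((Fin D ⊕ Fin D) × (Fin D ⊕ Fin D)) ℝ)
    (hP : ∀ M ∈ matGenGroup
        {M | ∃ v : Fin D → ℝ, (∀ i, v i = 0 ∨ v i = 1) ∧ M = transferQ1D D E v},
      MvPolynomial.eval (fun q => M q.1 q.2) P = 0) :
    ∀ d : Fin D → ℝ,
      MvPolynomial.eval
        (fun q => Matrix.fromBlocks 1 (Matrix.diagonal d) 0 1 q.1 q.2) P = 0 := by
  intro d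
  set S : Set (Matrix (Fin D ⊕ Fin D) (Fin D ⊕ Fin D) ℝ) :=
    {M | ∃ v : Fin D → ℝ, (∀ i, v i = 0 ∨ v i = 1) ∧ M = transferQ1D D E v} with hS
  set A : (Fin D → ℝ) → Matrix (Fin D) (Fin D) ℝ :=
    fun v => V0 D + Matrix.diagonal v - E • 1 with hA
  set U : (Fin D → ℝ) → Matrix (Fin D ⊕ Fin D) (Fin D ⊕ Fin D) ℝ :=
    fun δ => Matrix.fromBlocks 1 (Matrix.diagonal δ) 0 1 with hU
  -- inverse of transfer matrices
  have hTinv : ∀ v : Fin D → ℝ,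
      (transferQ1D D E v)⁻¹ = Matrix.fromBlocks 0 1 (-1) (A v) := by
    intro v
    apply Matrix.inv_eq_right_inv
    rw [transferQ1D, Matrix.fromBlocks_multiply]
    simp [← Matrix.fromBlocks_one, hA]
  -- U δ products
  have hUmul : ∀ δ δ' : Fin D → ℝ, U δ * U δ' = U (δ + δ') := by
    intro δ δ'
    simp only [hU, Matrix.fromBlocks_multiply, Matrix.one_mul, Matrix.mul_one,
      Matrix.mul_zero, Matrix.zero_mul, add_zero, zero_add, Matrix.diagonal_add]
    rw [show (fun i => δ' i + δ i) = δ + δ' from funext fun i => add_comm _ _]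
  have hU0 : U 0 = 1 := by
    rw [hU]
    show Matrix.fromBlocks 1 (Matrix.diagonal (0 : Fin D → ℝ)) 0 1 = 1
    rw [show Matrix.diagonal (0 : Fin D → ℝ) = 0 from Matrix.diagonal_zero,
      Matrix.fromBlocks_one]
  -- T v * (T w)⁻¹ = U (v - w)
  have hTT : ∀ v w : Fin D → ℝ,
      transferQ1D D E v * (transferQ1D D E w)⁻¹ = U (v - w) := by
    intro v w
    rw [hTinv, transferQ1D, Matrix.fromBlocks_multiply, hU]
    congr 1 <;> simp [hA, Matrix.diagonal_sub]
  -- membership of U(e_i) and U(-e_i)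
  have hself : ∀ v : Fin D → ℝ, (∀ i, v i = 0 ∨ v i = 1) →
      transferQ1D D E v ∈ Submonoid.closure (S ∪ (Inv.inv '' S)) := by
    intro v hv
    exact Submonoid.subset_closure (Or.inl ⟨v, hv, rfl⟩)
  have hinv : ∀ v : Fin D → ℝ, (∀ i, v i = 0 ∨ v i = 1) →
      (transferQ1D D E v)⁻¹ ∈ Submonoid.closure (S ∪ (Inv.inv '' S)) := by
    intro v hv
    exact Submonoid.subset_closure (Or.inr ⟨transferQ1D D E v, ⟨v, hv, rfl⟩, rfl⟩)
  have hUe : ∀ i : Fin D, ∀ (s : Bool),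
      U (fun j => if j = i then (if s then 1 else -1) else 0) ∈
        Submonoid.closure (S ∪ (Inv.inv '' S)) := by
    intro i s
    cases s
    · have := Submonoid.mul_mem _ (hself 0 (fun _ => Or.inl rfl))
        (hinv (fun j => if j = i then 1 else 0)
          (fun j => by by_cases h : j = i <;> simp [h]))
      rw [hTT] at this
      convert this using 2
      funext j; by_cases h : j = i <;> simp [h]
    · have := Submonoid.mul_mem _
        (hself (fun j => if j = i then 1 else 0)
          (fun j => by by_cases h : j = i <;> simp [h]))
        (hinv 0 (fun _ => Or.inl rfl))
      rw [hTT] at this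
      convert this using 2
      funext j; by_cases h : j = i <;> simp [h]
  -- U(c • e_i) membership for integer c
  have hUc : ∀ i : Fin D, ∀ c : ℤ,
      U (fun j => if j = i then (c : ℝ) else 0) ∈
        Submonoid.closure (S ∪ (Inv.inv '' S)) := by
    intro i c
    induction c using Int.induction_on with
    | zero => convert Submonoid.one_mem _ using 1
              convert hU0 using 2; funext j; by_cases h : j = i <;> simp [h]
    | succ k ihk =>
        have := Submonoid.mul_mem _ ihk (hUe i true)
        rw [hUmul] at this
        convert this using 2
        funext j; by_cases h : j = i <;> simp [h]
    | pred k ihk =>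
        have := Submonoid.mul_mem _ ihk (hUe i false)
        rw [hUmul] at this
        convert this using 2
        funext j; by_cases h : j = i <;> simp [h]; ring
  -- U(z) membership for all integer vectors z
  have hUz : ∀ z : Fin D → ℤ,
      U (fun i => (z i : ℝ)) ∈ Submonoid.closure (S ∪ (Inv.inv '' S)) := by
    intro z
    have main : ∀ s : Finset (Fin D),
        U (fun i => if i ∈ s then (z i : ℝ) else 0) ∈
          Submonoid.closure (S ∪ (Inv.inv '' S)) := by
      intro s
      induction s using Finset.induction_on with
      | empty =>
          rw [show (fun i => if i ∈ (∅ : Finset (Fin D)) then (z i : ℝ) else 0) = 0 from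
            funext fun i => by simp, hU0]
          exact Submonoid.one_mem _
      | @insert a s ha ih =>
          have := Submonoid.mul_mem _ (hUc a (z a)) ih
          rw [hUmul] at this
          convert this using 2
          funext j
          by_cases h : j = a
          · subst h; simp [ha]
          · simp [h]
    have := main Finset.univ
    simpa using this
  -- The polynomial in D variables
  set g : (Fin D ⊕ Fin D) × (Fin D ⊕ Fin D) → MvPolynomial (Fin D) ℝ :=
    fun q => (Matrix.fromBlocks 1 (Matrix.diagonal (fun i => MvPolynomial.X i)) 0 1 :
        Matrix (Fin D ⊕ Fin D) (Fin D ⊕ Fin D) (MvPolynomial (Fin D) ℝ)) q.1 q.2 with hg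
  set p : MvPolynomial (Fin D) ℝ := MvPolynomial.aeval g P with hp'
  have heval : ∀ x : Fin D → ℝ,
      MvPolynomial.eval x p = MvPolynomial.eval (fun q => U x q.1 q.2) P := by
    intro x
    rw [hp', MvPolynomial.aeval_def,
      MvPolynomial.eval₂_comp_left (MvPolynomial.eval x)]
    rw [show (MvPolynomial.eval x).comp (algebraMap ℝ (MvPolynomial (Fin D) ℝ))
        = RingHom.id ℝ from by ext r; simp]
    rw [MvPolynomial.eval₂_id]
    have hfun : (⇑(MvPolynomial.eval x) ∘ g)
        = (fun q : (Fin D ⊕ Fin D) × (Fin D ⊕ Fin D) => U x q.1 q.2) := by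
      funext q
      obtain ⟨q1, q2⟩ := q
      rcases q1 with i | i <;> rcases q2 with j | j <;>
        simp [hg, hU, Function.comp, Matrix.one_apply, Matrix.diagonal_apply, apply_ite] <;>
        (try (split <;> simp_all))
    rw [hfun]
  have hpz : p = 0 := by
    apply mv_zero_of_int_vanish
    intro z
    rw [heval]
    exact hP _ (hUz z)
  have := heval d
  rw [hpz, map_zero] at this
  exact this.symm
end

section
/- Let D ≥ 1. For i,j ∈ {1,…,D} let E_{ij} ∈ M_D(ℝ) be the elementary matrix with entry 1 in position (i,j) and 0 elsewhere, and define the 2D×2D block matrices X_{ij} = (1/2)·[[0, E_{ij}+E_{ji}],[0, 0]] and Y_{ij} = X_{ij}ᵀ. Then the Lie subalgebra of M_{2D}(ℝ) (with bracket [A,B] = AB − BA) generated by the set {X_{ij}, Y_{ij} : i,j ∈ {1,…,D}, |i−j| ≤ 1} is equal to 𝔰𝔭_D(ℝ). -/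
open scoped Matrix

attribute [local instance 100] LieRing.ofAssociativeRing

/-- The symplectic Lie algebra `𝔰𝔭_D(ℝ)`, as a set of `2D × 2D` real matrices `X` with
`Xᵀ J + J X = 0`. -/
def spSet (D : ℕ) : Set (Matrix (Fin D ⊕ Fin D) (Fin D ⊕ Fin D) ℝ) :=
  {X | Xᵀ * Jmat D + Jmat D * X = 0}

/-- The elementary matrix `E_{ij}`. -/
def Emat (D : ℕ) (i j : Fin D) : Matrix (Fin D) (Fin D) ℝ :=
  Matrix.single i j 1

/-- `X_{ij} = (1/2)·[[0, E_{ij}+E_{ji}],[0,0]]`. -/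
noncomputable def Xmat (D : ℕ) (i j : Fin D) : Matrix (Fin D ⊕ Fin D) (Fin D ⊕ Fin D) ℝ :=
  (1 / 2 : ℝ) • Matrix.fromBlocks 0 (Emat D i j + Emat D j i) 0 0

/-- `Y_{ij} = X_{ij}ᵀ`. -/
noncomputable def Ymat (D : ℕ) (i j : Fin D) : Matrix (Fin D ⊕ Fin D) (Fin D ⊕ Fin D) ℝ :=
  (Xmat D i j)ᵀ

namespace SpAux

open Matrix

variable {D : ℕ}

def AbL (D : ℕ) : Matrix (Fin D) (Fin D) ℝ →ₗ[ℝ] Matrix (Fin D ⊕ Fin D) (Fin D ⊕ Fin D) ℝ where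
  toFun M := Matrix.fromBlocks M 0 0 (-Mᵀ)
  map_add' M N := by
    show fromBlocks (M + N) 0 0 (-(M + N)ᵀ) = _
    simp [Matrix.fromBlocks_add, Matrix.transpose_add, neg_add]
    abel
  map_smul' c M := by
    show fromBlocks (c • M) 0 0 (-(c • M)ᵀ) = _
    simp [Matrix.fromBlocks_smul, Matrix.transpose_smul]

def XbL (D : ℕ) : Matrix (Fin D) (Fin D) ℝ →ₗ[ℝ] Matrix (Fin D ⊕ Fin D) (Fin D ⊕ Fin D) ℝ where
  toFun B := Matrix.fromBlocks 0 B 0 0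
  map_add' M N := by
    show fromBlocks 0 (M + N) 0 0 = _
    simp [Matrix.fromBlocks_add]
  map_smul' c M := by
    show fromBlocks 0 (c • M) 0 0 = _
    simp [Matrix.fromBlocks_smul]

def YbL (D : ℕ) : Matrix (Fin D) (Fin D) ℝ →ₗ[ℝ] Matrix (Fin D ⊕ Fin D) (Fin D ⊕ Fin D) ℝ where
  toFun C := Matrix.fromBlocks 0 0 C 0
  map_add' M N := by
    show fromBlocks 0 0 (M + N) 0 = _
    simp [Matrix.fromBlocks_add]
  map_smul' c M := by
    show fromBlocks 0 0 (c • M) 0 = _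
    simp [Matrix.fromBlocks_smul]

lemma AbL_apply (M : Matrix (Fin D) (Fin D) ℝ) : AbL D M = fromBlocks M 0 0 (-Mᵀ) := rfl
lemma XbL_apply (B : Matrix (Fin D) (Fin D) ℝ) : XbL D B = fromBlocks 0 B 0 0 := rfl
lemma YbL_apply (C : Matrix (Fin D) (Fin D) ℝ) : YbL D C = fromBlocks 0 0 C 0 := rfl

lemma lie_Xb_Yb (B C : Matrix (Fin D) (Fin D) ℝ) (hB : Bᵀ = B) (hC : Cᵀ = C) :
    ⁅XbL D B, YbL D C⁆ = AbL D (B * C) := by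
  rw [Ring.lie_def, XbL_apply, YbL_apply, AbL_apply, Matrix.fromBlocks_multiply,
    Matrix.fromBlocks_multiply, sub_eq_add_neg, Matrix.fromBlocks_neg,
    Matrix.transpose_mul, hB, hC]
  simp [Matrix.fromBlocks_add]

lemma lie_Ab_Xb (M B : Matrix (Fin D) (Fin D) ℝ) :
    ⁅AbL D M, XbL D B⁆ = XbL D (M * B + B * Mᵀ) := by
  rw [Ring.lie_def, XbL_apply, AbL_apply, XbL_apply, Matrix.fromBlocks_multiply,
    Matrix.fromBlocks_multiply, sub_eq_add_neg, Matrix.fromBlocks_neg]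
  simp [Matrix.fromBlocks_add, Matrix.mul_neg]

lemma lie_Ab_Yb (M C : Matrix (Fin D) (Fin D) ℝ) :
    ⁅AbL D M, YbL D C⁆ = YbL D (-(Mᵀ * C + C * M)) := by
  rw [Ring.lie_def, YbL_apply, AbL_apply, YbL_apply, Matrix.fromBlocks_multiply,
    Matrix.fromBlocks_multiply, sub_eq_add_neg, Matrix.fromBlocks_neg]
  simp only [Matrix.fromBlocks_add, Matrix.neg_mul, neg_add, Matrix.zero_mul, Matrix.mul_zero,
    add_zero, zero_add, neg_zero]

lemma lie_Ab_Ab (M N : Matrix (Fin D) (Fin D) ℝ) :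
    ⁅AbL D M, AbL D N⁆ = AbL D (M * N - N * M) := by
  rw [Ring.lie_def, AbL_apply, AbL_apply, AbL_apply, Matrix.fromBlocks_multiply,
    Matrix.fromBlocks_multiply, sub_eq_add_neg, Matrix.fromBlocks_neg]
  simp only [Matrix.fromBlocks_add, Matrix.transpose_sub, Matrix.transpose_mul, Matrix.neg_mul,
    Matrix.mul_neg, neg_neg, Matrix.zero_mul, Matrix.mul_zero, add_zero, zero_add, neg_zero,
    sub_eq_add_neg, neg_add, Matrix.transpose_add, Matrix.transpose_neg,
    smul_add, smul_neg]
  congr 1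
  abel

/-- symmetrized elementary matrix -/
noncomputable def Smat (D : ℕ) (i j : Fin D) : Matrix (Fin D) (Fin D) ℝ :=
  (1 / 2 : ℝ) • (Emat D i j + Emat D j i)

lemma Emat_transpose (i j : Fin D) : (Emat D i j)ᵀ = Emat D j i := by
  ext a b
  simp only [Emat, Matrix.transpose_apply, Matrix.single, Matrix.of_apply]
  by_cases h1 : i = b <;> by_cases h2 : j = a <;> simp [h1, h2]

lemma Smat_transpose (i j : Fin D) : (Smat D i j)ᵀ = Smat D i j := by
  rw [Smat, Matrix.transpose_smul, Matrix.transpose_add, Emat_transpose, Emat_transpose, add_comm]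

lemma Smat_diag (i : Fin D) : Smat D i i = Emat D i i := by
  rw [Smat, smul_add, ← add_smul]
  norm_num

lemma Emat_mul_same (i j k : Fin D) : Emat D i j * Emat D j k = Emat D i k := by
  rw [Emat, Emat, Emat, Matrix.single_mul_single_same, mul_one]

lemma Emat_mul_of_ne (i j k l : Fin D) (h : j ≠ k) : Emat D i j * Emat D k l = 0 :=
  Matrix.single_mul_single_of_ne (c := 1) i j k h 1

lemma Xmat_eq (i j : Fin D) : Xmat D i j = XbL D (Smat D i j) := by
  rw [Xmat, XbL_apply, Smat, Matrix.fromBlocks_smul]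
  simp

lemma Ymat_eq (i j : Fin D) : Ymat D i j = YbL D (Smat D i j) := by
  rw [Ymat, Xmat_eq, XbL_apply, YbL_apply, Matrix.fromBlocks_transpose, Smat_transpose]
  simp

end SpAux

namespace SpAux
open Matrix
variable {D : ℕ}

def gen (D : ℕ) : Set (Matrix (Fin D ⊕ Fin D) (Fin D ⊕ Fin D) ℝ) :=
  {X | ∃ i j : Fin D, ((i : ℤ) - (j : ℤ)).natAbs ≤ 1 ∧ (X = Xmat D i j ∨ X = Ymat D i j)}

noncomputable def L (D : ℕ) : LieSubalgebra ℝ (Matrix (Fin D ⊕ Fin D) (Fin D ⊕ Fin D) ℝ) :=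
  LieSubalgebra.lieSpan ℝ _ (gen D)

lemma memX (i j : Fin D) (h : ((i : ℤ) - (j : ℤ)).natAbs ≤ 1) : Xmat D i j ∈ L D :=
  LieSubalgebra.subset_lieSpan ⟨i, j, h, Or.inl rfl⟩

lemma memY (i j : Fin D) (h : ((i : ℤ) - (j : ℤ)).natAbs ≤ 1) : Ymat D i j ∈ L D :=
  LieSubalgebra.subset_lieSpan ⟨i, j, h, Or.inr rfl⟩

lemma memXbS (i j : Fin D) (h : ((i : ℤ) - (j : ℤ)).natAbs ≤ 1) : XbL D (Smat D i j) ∈ L D :=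
  Xmat_eq i j ▸ memX i j h

lemma memYbS (i j : Fin D) (h : ((i : ℤ) - (j : ℤ)).natAbs ≤ 1) : YbL D (Smat D i j) ∈ L D :=
  Ymat_eq i j ▸ memY i j h

lemma memXbE (i : Fin D) : XbL D (Emat D i i) ∈ L D := by
  rw [← Smat_diag]; exact memXbS i i (by simp)

lemma memYbE (i : Fin D) : YbL D (Emat D i i) ∈ L D := by
  rw [← Smat_diag]; exact memYbS i i (by simp)

lemma Emat_sym_transpose (i : Fin D) : (Emat D i i)ᵀ = Emat D i i := Emat_transpose i i

lemma memAb_near (i j : Fin D) (h : ((i : ℤ) - (j : ℤ)).natAbs ≤ 1) :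
    AbL D (Emat D i j) ∈ L D := by
  by_cases hij : i = j
  · subst hij
    have hb := (L D).lie_mem (memXbE i) (memYbE i)
    rw [lie_Xb_Yb _ _ (Emat_sym_transpose i) (Emat_sym_transpose i), Emat_mul_same] at hb
    exact hb
  · have hb := (L D).lie_mem (memXbS i j h) (memYbE j)
    rw [lie_Xb_Yb _ _ (Smat_transpose i j) (Emat_sym_transpose j)] at hb
    have hm : Smat D i j * Emat D j j = (1 / 2 : ℝ) • Emat D i j := by
      rw [Smat, Matrix.smul_mul, add_mul, Emat_mul_same,
        Emat_mul_of_ne j i j j (fun hc => hij (hc ▸ rfl)), add_zero]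
    rw [hm, _root_.map_smul] at hb
    have h2 := (L D).smul_mem (2 : ℝ) hb
    rw [smul_smul] at h2
    norm_num at h2
    exact h2

lemma memAb (p q : Fin D) : AbL D (Emat D p q) ∈ L D := by
  suffices H : ∀ k, ∀ p q : Fin D, ((p : ℤ) - (q : ℤ)).natAbs = k → AbL D (Emat D p q) ∈ L D from
    H _ p q rfl
  intro k
  induction k using Nat.strong_induction_on with
  | _ k ih =>
    intro p q hk
    by_cases h1 : ((p : ℤ) - (q : ℤ)).natAbs ≤ 1
    · exact memAb_near p q h1
    · have hk2 : 2 ≤ k := by omega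
      have hne : (q : ℕ) ≠ (p : ℕ) := by omega
      have hnef : q ≠ p := fun hc => hne (congrArg Fin.val hc)
      rcases lt_or_ge (p : ℕ) (q : ℕ) with hlt | hle
      · have hr : (p : ℕ) + 1 < D := lt_of_le_of_lt hlt q.isLt
        set r : Fin D := ⟨(p : ℕ) + 1, hr⟩ with hrdef
        have hrv : (r : ℕ) = (p : ℕ) + 1 := rfl
        have m1 : AbL D (Emat D p r) ∈ L D := ih 1 (by omega) p r (by omega)
        have m2 : AbL D (Emat D r q) ∈ L D := ih (k - 1) (by omega) r q (by omega)
        have hb := (L D).lie_mem m1 m2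
        rw [lie_Ab_Ab, Emat_mul_same, Emat_mul_of_ne r q p r hnef, sub_zero] at hb
        exact hb
      · have hlt' : (q : ℕ) < (p : ℕ) := by omega
        have hr : (q : ℕ) + 1 < D := lt_of_le_of_lt hlt' p.isLt
        set r : Fin D := ⟨(q : ℕ) + 1, hr⟩ with hrdef
        have hrv : (r : ℕ) = (q : ℕ) + 1 := rfl
        have m1 : AbL D (Emat D p r) ∈ L D := ih (k - 1) (by omega) p r (by omega)
        have m2 : AbL D (Emat D r q) ∈ L D := ih 1 (by omega) r q (by omega)
        have hb := (L D).lie_mem m1 m2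
        rw [lie_Ab_Ab, Emat_mul_same, Emat_mul_of_ne r q p r hnef, sub_zero] at hb
        exact hb

lemma memXbS_all (p q : Fin D) : XbL D (Smat D p q) ∈ L D := by
  have hb := (L D).lie_mem (memAb p q) (memXbE q)
  rw [lie_Ab_Xb] at hb
  have hm : Emat D p q * Emat D q q + Emat D q q * (Emat D p q)ᵀ = (2 : ℝ) • Smat D p q := by
    rw [Emat_mul_same, Emat_transpose, Emat_mul_same, Smat, smul_smul]
    norm_num
  rw [hm, _root_.map_smul] at hb
  have h2 := (L D).smul_mem (1 / 2 : ℝ) hb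
  rw [smul_smul] at h2
  norm_num at h2
  exact h2

lemma memYbS_all (p q : Fin D) : YbL D (Smat D p q) ∈ L D := by
  have hb := (L D).lie_mem (memAb q p) (memYbE q)
  rw [lie_Ab_Yb] at hb
  have hm : -((Emat D q p)ᵀ * Emat D q q + Emat D q q * Emat D q p) = (-2 : ℝ) • Smat D p q := by
    rw [Emat_transpose, Emat_mul_same, Emat_mul_same, Smat, smul_smul]
    norm_num
    abel
  rw [hm, _root_.map_smul] at hb
  have h2 := (L D).smul_mem (-1 / 2 : ℝ) hb
  rw [smul_smul] at h2
  norm_num at h2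
  exact h2

end SpAux

namespace SpAux
open Matrix
variable {D : ℕ}

lemma sum_smul_Emat (A : Matrix (Fin D) (Fin D) ℝ) :
    ∑ p, ∑ q, A p q • Emat D p q = A := by
  conv_rhs => rw [Matrix.matrix_eq_sum_single A]
  refine Finset.sum_congr rfl fun p _ => Finset.sum_congr rfl fun q _ => ?_
  rw [Emat, Matrix.smul_single, smul_eq_mul, mul_one]

lemma Ab_mem (A : Matrix (Fin D) (Fin D) ℝ) : AbL D A ∈ L D := by
  rw [← LieSubalgebra.mem_toSubmodule, ← sum_smul_Emat A, map_sum]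
  refine Submodule.sum_mem _ fun p _ => ?_
  rw [map_sum]
  refine Submodule.sum_mem _ fun q _ => ?_
  rw [_root_.map_smul]
  exact Submodule.smul_mem _ _ ((LieSubalgebra.mem_toSubmodule _).mpr (memAb p q))

lemma sym_sum (B : Matrix (Fin D) (Fin D) ℝ) (hB : Bᵀ = B) :
    ∑ p, ∑ q, B p q • Smat D p q = B := by
  have key : ∀ p q : Fin D, B p q • Smat D p q
      = (1 / 2 : ℝ) • (B p q • Emat D p q) + (1 / 2 : ℝ) • (B p q • Emat D q p) := by
    intro p q
    rw [Smat, smul_comm (B p q) ((1/2 : ℝ)), smul_add (B p q), smul_add ((1/2 : ℝ))]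
  simp only [key, Finset.sum_add_distrib, ← Finset.smul_sum]
  have h1 : ∑ p, ∑ q, B p q • Emat D p q = B := sum_smul_Emat B
  have h2 : ∑ p, ∑ q, B p q • Emat D q p = B := by
    have hT := sum_smul_Emat (D := D) Bᵀ
    rw [Finset.sum_comm]
    conv_rhs => rw [← hB, ← hT]
    refine Finset.sum_congr rfl fun a _ => Finset.sum_congr rfl fun b _ => ?_
    rw [Matrix.transpose_apply]
  rw [h1, h2]
  module

lemma Xb_mem (B : Matrix (Fin D) (Fin D) ℝ) (hB : Bᵀ = B) : XbL D B ∈ L D := by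
  rw [← LieSubalgebra.mem_toSubmodule, ← sym_sum B hB, map_sum]
  refine Submodule.sum_mem _ fun p _ => ?_
  rw [map_sum]
  refine Submodule.sum_mem _ fun q _ => ?_
  rw [_root_.map_smul]
  exact Submodule.smul_mem _ _ ((LieSubalgebra.mem_toSubmodule _).mpr (memXbS_all p q))

lemma Yb_mem (C : Matrix (Fin D) (Fin D) ℝ) (hC : Cᵀ = C) : YbL D C ∈ L D := by
  rw [← LieSubalgebra.mem_toSubmodule, ← sym_sum C hC, map_sum]
  refine Submodule.sum_mem _ fun p _ => ?_
  rw [map_sum]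
  refine Submodule.sum_mem _ fun q _ => ?_
  rw [_root_.map_smul]
  exact Submodule.smul_mem _ _ ((LieSubalgebra.mem_toSubmodule _).mpr (memYbS_all p q))

lemma Xb_mem_sp (B : Matrix (Fin D) (Fin D) ℝ) (hB : Bᵀ = B) : XbL D B ∈ spSet D := by
  show (XbL D B)ᵀ * Jmat D + Jmat D * XbL D B = 0
  rw [XbL_apply, Jmat, Matrix.fromBlocks_transpose, Matrix.fromBlocks_multiply,
    Matrix.fromBlocks_multiply, Matrix.fromBlocks_add]
  simp [hB]

lemma Yb_mem_sp (C : Matrix (Fin D) (Fin D) ℝ) (hC : Cᵀ = C) : YbL D C ∈ spSet D := by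
  show (YbL D C)ᵀ * Jmat D + Jmat D * YbL D C = 0
  rw [YbL_apply, Jmat, Matrix.fromBlocks_transpose, Matrix.fromBlocks_multiply,
    Matrix.fromBlocks_multiply, Matrix.fromBlocks_add]
  simp [hC]

lemma sp_eq_skew : spSet D = ↑(skewAdjointMatricesLieSubalgebra (Jmat D)) := by
  ext Z
  rw [spSet, Set.mem_setOf_eq, SetLike.mem_coe, mem_skewAdjointMatricesLieSubalgebra,
    mem_skewAdjointMatricesSubmodule]
  unfold Matrix.IsSkewAdjoint Matrix.IsAdjointPair
  rw [Matrix.mul_neg]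
  constructor
  · exact fun h => eq_neg_of_add_eq_zero_left h
  · intro h
    rw [h, neg_add_cancel]

end SpAux

/-- The Lie subalgebra of `M_{2D}(ℝ)` generated by the matrices `X_{ij}`, `Y_{ij}` for
`|i − j| ≤ 1` is the full symplectic Lie algebra `𝔰𝔭_D(ℝ)`. -/
theorem lieSpan_X_Y_eq_sp (D : ℕ) (hD : 1 ≤ D) :
    (LieSubalgebra.lieSpan ℝ (Matrix (Fin D ⊕ Fin D) (Fin D ⊕ Fin D) ℝ)
        {X | ∃ i j : Fin D, ((i : ℤ) - (j : ℤ)).natAbs ≤ 1 ∧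
          (X = Xmat D i j ∨ X = Ymat D i j)} : Set (Matrix (Fin D ⊕ Fin D) (Fin D ⊕ Fin D) ℝ))
      = spSet D := by
  apply Set.Subset.antisymm
  · rw [SpAux.sp_eq_skew]
    intro x hx
    refine LieSubalgebra.lieSpan_le.mpr ?_ hx
    rintro X ⟨i, j, hij, rfl | rfl⟩
    · show Xmat D i j ∈ (↑(skewAdjointMatricesLieSubalgebra (Jmat D)) :
        Set (Matrix (Fin D ⊕ Fin D) (Fin D ⊕ Fin D) ℝ))
      rw [← SpAux.sp_eq_skew, SpAux.Xmat_eq]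
      exact SpAux.Xb_mem_sp _ (SpAux.Smat_transpose i j)
    · show Ymat D i j ∈ (↑(skewAdjointMatricesLieSubalgebra (Jmat D)) :
        Set (Matrix (Fin D ⊕ Fin D) (Fin D ⊕ Fin D) ℝ))
      rw [← SpAux.sp_eq_skew, SpAux.Ymat_eq]
      exact SpAux.Yb_mem_sp _ (SpAux.Smat_transpose i j)
  · intro Z hZ
    have hz : Zᵀ * Jmat D + Jmat D * Z = 0 := hZ
    obtain ⟨A, B, C, D', hZeq⟩ :
        ∃ A B C D', Z = Matrix.fromBlocks A B C D' :=
      ⟨_, _, _, _, (Matrix.fromBlocks_toBlocks Z).symm⟩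
    rw [hZeq, Jmat, Matrix.fromBlocks_transpose, Matrix.fromBlocks_multiply,
      Matrix.fromBlocks_multiply, Matrix.fromBlocks_add] at hz
    simp only [Matrix.mul_zero, Matrix.zero_mul, Matrix.mul_one, Matrix.one_mul,
      Matrix.mul_neg, Matrix.neg_mul, Matrix.mul_one, add_zero, zero_add, neg_zero] at hz
    have hz2 := hz.trans (Matrix.fromBlocks_zero).symm
    obtain ⟨h11, h12, h21, h22⟩ := Matrix.fromBlocks_inj.mp hz2
    have hC : Cᵀ = C := by
      have h := eq_neg_of_add_eq_zero_left h11
      rw [neg_neg] at h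
      exact h.symm ▸ rfl
    have hB : Bᵀ = B := by
      have h := eq_neg_of_add_eq_zero_left h22
      exact neg_injective h
    have hD' : D' = -Aᵀ := by
      have h := eq_neg_of_add_eq_zero_left h12
      rw [neg_neg] at h
      exact h.symm
    have hdecomp : Z = SpAux.AbL D A + SpAux.XbL D B + SpAux.YbL D C := by
      rw [hZeq, SpAux.AbL_apply, SpAux.XbL_apply, SpAux.YbL_apply, hD',
        Matrix.fromBlocks_add, Matrix.fromBlocks_add]
      simp
    show Z ∈ SpAux.L D
    rw [hdecomp]
    exact (SpAux.L D).add_mem ((SpAux.L D).add_mem (SpAux.Ab_mem A) (SpAux.Xb_mem B hB))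
      (SpAux.Yb_mem C hC)
end
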